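/- Let u_1, u_2, ... be an enumeration of the nonempty minimally balanced words over {x,y} and let ū_i denote the letter-swap of u_i. The map φ sending x_i to u_i + ū_i, extended multiplicatively to monomials and linearly, is an injective ring homomorphism from the free algebra F⟨x_1, x_2, ...⟩ into F⟨x,y⟩. -/

import Mathlib

/-- The imbalance of a word over `{x,y}` (with `x = true`, `y = false`):
number of `x`'s minus number of `y`'s. -/
def imbL (m : List Bool) : ℤ := (m.count true : ℤ) - (m.count false : ℤ)

/-- A nonempty word over `{x,y}` is minimally balanced if its imbalance is `0`
and every nonempty proper prefix has strictly positive imbalance. -/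
def MinBal (m : List Bool) : Prop :=
  m ≠ [] ∧ imbL m = 0 ∧ ∀ p : List Bool, p <+: m → p ≠ [] → p ≠ m → 0 < imbL p
lemma minbal_head {m : List Bool} (h : MinBal m) : ∃ t, m = true :: t := by
  obtain ⟨hne, hz, hp⟩ := h
  cases m with
  | nil => exact absurd rfl hne
  | cons c t =>
    cases t with
    | nil => cases c <;> simp [imbL] at hz
    | cons d s =>
      have h1 : 0 < imbL [c] := hp [c] ⟨d::s, rfl⟩ (by simp) (by simp)
      cases c
      · simp [imbL] at h1
      · exact ⟨d::s, rfl⟩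

lemma minbal_prefix_eq {a b : List Bool} (ha : MinBal a) (hb : MinBal b) (h : a <+: b) :
    a = b := by
  by_contra hne
  have := hb.2.2 a h ha.1 hne
  rw [ha.2.1] at this
  exact lt_irrefl 0 this


noncomputable section

open MonoidAlgebra FreeMonoid

/-- The degree of a noncommutative polynomial in the free algebra
`F⟨X⟩ = MonoidAlgebra F (FreeMonoid X)`. -/
def ncDeg {F : Type*} [Field F] {X : Type*} (f : MonoidAlgebra F (FreeMonoid X)) : ℕ :=
  f.coeff.support.sup fun m => m.length

/-- The algebra homomorphism `F⟨X⟩ → F⟨x,y⟩` determined by its values `v i`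
on the variables, extended multiplicatively to monomials and linearly. -/

def Vb (F : Type*) [Field F] (u : ℕ → List Bool) (i : ℕ) :
    MonoidAlgebra F (FreeMonoid Bool) :=
  MonoidAlgebra.single (FreeMonoid.ofList (u i)) 1
    + MonoidAlgebra.single (FreeMonoid.ofList ((u i).map not)) 1

lemma key_lemma {F : Type*} [Field F] (u : ℕ → List Bool)
    (hinj : Function.Injective u) (hmb : ∀ i, MinBal (u i)) :
    ∀ (t m : List ℕ),
      ((t.map (Vb F u)).prod : MonoidAlgebra F (FreeMonoid Bool)).coeff
        (FreeMonoid.ofList (m.map u).flatten)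
      = if t = m then 1 else 0 := by
  classical
  intro t
  induction t with
  | nil =>
    intro m
    simp only [List.map_nil, List.prod_nil]
    have h1 : (1 : MonoidAlgebra F (FreeMonoid Bool)) = MonoidAlgebra.single 1 1 := rfl
    rw [h1, MonoidAlgebra.coeff_single, Finsupp.single_apply]
    congr 1
    · -- (1 = ofList flatten) = ([] = m)
      simp only [eq_iff_iff]
      constructor
      · intro h
        cases m with
        | nil => rfl
        | cons j s =>
          exfalso
          have : ((j::s).map u).flatten = [] := congrArg FreeMonoid.toList h.symm
          simp only [List.map_cons, List.flatten_cons, List.append_eq_nil_iff] at this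
          exact (hmb j).1 this.1
      · rintro rfl; rfl
  | cons i s ih =>
    intro m
    simp only [List.map_cons, List.prod_cons, Vb, add_mul]
    rw [MonoidAlgebra.coeff_add, Finsupp.add_apply]
    have hbar : ((MonoidAlgebra.single (FreeMonoid.ofList ((u i).map not)) (1:F) *
        (s.map (Vb F u)).prod : MonoidAlgebra F (FreeMonoid Bool))).coeff
        (FreeMonoid.ofList (m.map u).flatten) = 0 := by
      apply MonoidAlgebra.single_mul_apply_of_not_exists_mul
      rintro ⟨d, hd⟩
      have hd' : (m.map u).flatten = (u i).map not ++ FreeMonoid.toList d :=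
        congrArg FreeMonoid.toList hd
      obtain ⟨ti, hti⟩ := minbal_head (hmb i)
      cases m with
      | nil => rw [hti] at hd'; simp at hd'
      | cons j s' =>
        obtain ⟨tj, htj⟩ := minbal_head (hmb j)
        rw [hti] at hd'
        simp only [List.map_cons, List.flatten_cons, htj, List.map_cons] at hd'
        simp at hd'
    rw [hbar, add_zero]
    cases m with
    | nil =>
      rw [MonoidAlgebra.single_mul_apply_of_not_exists_mul]
      · simp
      · rintro ⟨d, hd⟩
        have hd' : ([] : List Bool) = u i ++ FreeMonoid.toList d :=
          congrArg FreeMonoid.toList hd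
        obtain ⟨ti, hti⟩ := minbal_head (hmb i)
        rw [hti] at hd'; simp at hd'
    | cons j s' =>
      by_cases hij : i = j
      · subst hij
        have H : ∀ a : FreeMonoid Bool, FreeMonoid.ofList (u i) * a =
            FreeMonoid.ofList (((i::s').map u).flatten) ↔
            a = FreeMonoid.ofList ((s'.map u).flatten) := by
          intro a
          constructor
          · intro h
            apply mul_left_cancel (a := FreeMonoid.ofList (u i))
            rw [h]
            show FreeMonoid.ofList (((i::s').map u).flatten)
              = FreeMonoid.ofList (u i ++ (s'.map u).flatten)
            simp
          · rintro rfl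
            show FreeMonoid.ofList (u i ++ (s'.map u).flatten)
              = FreeMonoid.ofList (((i::s').map u).flatten)
            simp
        rw [MonoidAlgebra.single_mul_apply_aux _ (fun a _ => H a), one_mul, ih s']
        simp
      · rw [MonoidAlgebra.single_mul_apply_of_not_exists_mul]
        · simp [hij]
        · rintro ⟨d, hd⟩
          have hd' : ((j::s').map u).flatten = u i ++ FreeMonoid.toList d :=
            congrArg FreeMonoid.toList hd
          simp only [List.map_cons, List.flatten_cons] at hd'
          have hpi : u i <+: u j ++ (s'.map u).flatten := ⟨_, hd'.symm⟩
          have hpj : u j <+: u j ++ (s'.map u).flatten := ⟨_, rfl⟩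
          have heq : u i = u j := by
            rcases List.prefix_or_prefix_of_prefix hpi hpj with h | h
            · exact minbal_prefix_eq (hmb i) (hmb j) h
            · exact (minbal_prefix_eq (hmb j) (hmb i) h).symm
          exact hij (hinj heq)

theorem bergman_aux (F : Type*) [Field F] (u : ℕ → List Bool)
    (hinj : Function.Injective u) (hmb : ∀ i, MinBal (u i))
    (hall : ∀ m : List Bool, MinBal m → ∃ i, u i = m) :
    Function.Injective (MonoidAlgebra.lift F _ (FreeMonoid ℕ)
      (FreeMonoid.lift (fun i : ℕ =>
      MonoidAlgebra.of F (FreeMonoid Bool) (FreeMonoid.ofList (u i)) +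
      MonoidAlgebra.of F (FreeMonoid Bool) (FreeMonoid.ofList ((u i).map not))))) := by
  classical
  set v : ℕ → MonoidAlgebra F (FreeMonoid Bool) := fun i =>
      MonoidAlgebra.of F (FreeMonoid Bool) (FreeMonoid.ofList (u i)) +
      MonoidAlgebra.of F (FreeMonoid Bool) (FreeMonoid.ofList ((u i).map not)) with hv
  have hvV : v = Vb F u := by
    funext i
    simp [hv, Vb, MonoidAlgebra.of_apply]
  set φ := MonoidAlgebra.lift F _ (FreeMonoid ℕ) (FreeMonoid.lift v) with hφ
  rw [injective_iff_map_eq_zero]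
  intro f hf
  have key : ∀ m : List ℕ,
      (φ f : MonoidAlgebra F (FreeMonoid Bool)).coeff (FreeMonoid.ofList (m.map u).flatten)
        = f.coeff (FreeMonoid.ofList m) := by
    intro m
    rw [hφ, MonoidAlgebra.lift_apply]
    rw [Finsupp.sum, MonoidAlgebra.coeff_sum, Finset.sum_apply']
    have step : ∀ (a : FreeMonoid ℕ) (b : F),
        (b • FreeMonoid.lift v a : MonoidAlgebra F (FreeMonoid Bool)).coeff
          (FreeMonoid.ofList (m.map u).flatten)
        = if a = FreeMonoid.ofList m then b else 0 := by
      intro a b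
      rw [MonoidAlgebra.coeff_smul, Finsupp.smul_apply, FreeMonoid.lift_apply, hvV, key_lemma u hinj hmb]
      simp only [show (FreeMonoid.toList a = m) = (a = FreeMonoid.ofList m) from rfl]
      split_ifs <;> simp
    calc (∑ a ∈ f.coeff.support,
            (f.coeff a • FreeMonoid.lift v a : MonoidAlgebra F (FreeMonoid Bool)).coeff
              (FreeMonoid.ofList (m.map u).flatten))
        = Finsupp.sum f.coeff fun a b => if a = FreeMonoid.ofList m then b else 0 :=
          Finset.sum_congr rfl (fun a _ => step a (f.coeff a))
      _ = f.coeff (FreeMonoid.ofList m) := Finsupp.sum_ite_self_eq' f.coeff (FreeMonoid.ofList m)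
  ext a
  have := key (FreeMonoid.toList a)
  rw [hf] at this
  simpa using this.symm

def phiGen {F : Type*} [Field F] {X : Type*}
    (v : X → MonoidAlgebra F (FreeMonoid Bool)) :
    MonoidAlgebra F (FreeMonoid X) →ₐ[F] MonoidAlgebra F (FreeMonoid Bool) :=
  MonoidAlgebra.lift F _ (FreeMonoid X) (FreeMonoid.lift v)

/-- Bergman's embedding: if `u 0, u 1, …` is an enumeration (without repetition)
of all nonempty minimally balanced words over `{x,y}`, then the map
`φ : x_i ↦ u_i + ū_i` (where `ū_i` is the letter-swap of `u_i`), extended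
multiplicatively to monomials and linearly, is an injective ring homomorphism
from the free algebra on countably many variables `F⟨x₁,x₂,…⟩` into `F⟨x,y⟩`. -/
theorem bergman_embedding_injective (F : Type*) [Field F] (u : ℕ → List Bool)
    (hinj : Function.Injective u) (hmb : ∀ i, MinBal (u i))
    (hall : ∀ m : List Bool, MinBal m → ∃ i, u i = m) :
    Function.Injective (phiGen (F := F) (fun i : ℕ =>
      MonoidAlgebra.of F (FreeMonoid Bool) (FreeMonoid.ofList (u i)) +
      MonoidAlgebra.of F (FreeMonoid Bool) (FreeMonoid.ofList ((u i).map not)))) := by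
  exact bergman_aux F u hinj hmb hall
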